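/- (Sublemma 9.3.) Let M be a monoid and let (s_a)_{a ∈ ℤ} be elements of M satisfying s_a s_b = s_b s_a whenever |a − b| ≥ 2, and s_a s_{a+1} s_a = s_{a+1} s_a s_{a+1} for all a. Write s_{i…j} := s_i s_{i+1} ⋯ s_j for i ≤ j, with s_{i…j} = 1 if j < i. Then for all integers i ≤ k ≤ ℓ ≤ j: s_{i…j} · s_{k…(ℓ−1)} = s_{(k+1)…ℓ} · s_{i…j}. -/

import Mathlib

/-- The ordered product `s_{i…j} = s_i s_{i+1} ⋯ s_j`, equal to `1` if `j < i`. -/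
def sProd {M : Type*} [Monoid M] (s : ℤ → M) (i j : ℤ) : M :=
  ((List.range (j - i + 1).toNat).map fun m => s (i + m)).prod

lemma sProd_eq {M : Type*} [Monoid M] (s : ℤ → M) (i j : ℤ) :
    sProd s i j = ((List.range (j - i + 1).toNat).map fun m : ℕ => s (i + (m:ℤ))).prod := by
  unfold sProd
  congr 1
  generalize List.range (j - i + 1).toNat = L
  induction L with
  | nil => rfl
  | cons a L ih => simp_all [List.flatMap_cons]

lemma sProd_of_lt {M : Type*} [Monoid M] (s : ℤ → M) {i j : ℤ} (h : j < i) :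
    sProd s i j = 1 := by
  rw [sProd_eq]
  have : (j - i + 1).toNat = 0 := by omega
  simp [this]

lemma sProd_succ_right {M : Type*} [Monoid M] (s : ℤ → M) {i j : ℤ} (h : i ≤ j) :
    sProd s i j = sProd s i (j - 1) * s j := by
  rw [sProd_eq, sProd_eq]
  have hn : (j - i + 1).toNat = (j - 1 - i + 1).toNat + 1 := by omega
  rw [hn, List.range_succ, List.map_append, List.prod_append]
  simp only [List.map_cons, List.map_nil, List.prod_cons, List.prod_nil, mul_one]
  rw [show i + ((j - 1 - i + 1).toNat : ℤ) = j from by omega]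

lemma sProd_single {M : Type*} [Monoid M] (s : ℤ → M) (a : ℤ) :
    sProd s a a = s a := by
  rw [sProd_succ_right s le_rfl, sProd_of_lt s (show a - 1 < a by omega), one_mul]

lemma sProd_split {M : Type*} [Monoid M] (s : ℤ → M) {i m j : ℤ}
    (h1 : i ≤ m) (h2 : m - 1 ≤ j) :
    sProd s i j = sProd s i (m - 1) * sProd s m j := by
  refine Int.le_induction
    (motive := fun j _ => sProd s i j = sProd s i (m - 1) * sProd s m j) ?_ ?_ j h2
  · beta_reduce
    rw [sProd_of_lt s (show m - 1 < m by omega), mul_one]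
  · intro j hj ih
    beta_reduce at ih ⊢
    rw [sProd_succ_right s (by omega : i ≤ j + 1),
      sProd_succ_right s (by omega : m ≤ j + 1)]
    simp only [add_sub_cancel_right]
    rw [ih, mul_assoc]

lemma sProd_comm {M : Type*} [Monoid M] (s : ℤ → M)
    (hcomm : ∀ a b : ℤ, 2 ≤ |a - b| → s a * s b = s b * s a)
    {i j b : ℤ} (hb : ∀ m, i ≤ m → m ≤ j → 2 ≤ |b - m|) :
    s b * sProd s i j = sProd s i j * s b := by
  have H : ∀ j : ℤ, i - 1 ≤ j → (∀ m, i ≤ m → m ≤ j → 2 ≤ |b - m|) →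
      s b * sProd s i j = sProd s i j * s b := by
    refine Int.le_induction ?_ ?_
    · intro _
      rw [sProd_of_lt s (show i - 1 < i by omega), one_mul, mul_one]
    · intro j hj ih hb'
      rw [sProd_succ_right s (by omega : i ≤ j + 1)]
      simp only [add_sub_cancel_right]
      rcases lt_or_ge j i with h2 | h2
      · rw [sProd_of_lt s h2]
        simp only [one_mul]
        exact hcomm b (j+1) (hb' (j+1) (by omega) (by omega))
      · rw [← mul_assoc, ih (fun m hm1 hm2 => hb' m hm1 (by omega)), mul_assoc,
          hcomm b (j+1) (hb' (j+1) (by omega) (by omega)), ← mul_assoc]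
  rcases lt_or_ge j i with h | h
  · rw [sProd_of_lt s h, one_mul, mul_one]
  · exact H j (by omega) hb

lemma sProd_key {M : Type*} [Monoid M] (s : ℤ → M)
    (hcomm : ∀ a b : ℤ, 2 ≤ |a - b| → s a * s b = s b * s a)
    (hbraid : ∀ a : ℤ, s a * s (a + 1) * s a = s (a + 1) * s a * s (a + 1))
    {i j a : ℤ} (ha1 : i ≤ a) (ha2 : a + 1 ≤ j) :
    sProd s i j * s a = s (a + 1) * sProd s i j := by
  have hsplit : sProd s i j
      = sProd s i (a - 1) * (s a * s (a + 1)) * sProd s (a + 2) j := by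
    rw [sProd_split s (le_trans ha1 (by omega) : i ≤ a + 2) (by omega),
      sProd_split s ha1 (by omega)]
    rw [show a + 2 - 1 = a + 1 from by omega,
      sProd_split s (by omega : a ≤ a + 1) (by omega)]
    simp only [add_sub_cancel_right, sProd_single, mul_assoc]
  have hc1 : s a * sProd s (a + 2) j = sProd s (a + 2) j * s a :=
    sProd_comm s hcomm (fun m hm1 hm2 => by rw [le_abs]; omega)
  have hc2 : s (a + 1) * sProd s i (a - 1) = sProd s i (a - 1) * s (a + 1) :=
    sProd_comm s hcomm (fun m hm1 hm2 => by rw [le_abs]; omega)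
  calc sProd s i j * s a
      = sProd s i (a - 1) * (s a * s (a + 1)) * (sProd s (a + 2) j * s a) := by
        rw [hsplit, mul_assoc, mul_assoc]
    _ = sProd s i (a - 1) * (s a * s (a + 1) * s a) * sProd s (a + 2) j := by
        rw [← hc1]; simp only [mul_assoc]
    _ = sProd s i (a - 1) * (s (a + 1) * s a * s (a + 1)) * sProd s (a + 2) j := by
        rw [hbraid a]
    _ = s (a + 1) * sProd s i j := by
        rw [hsplit, ← mul_assoc, ← mul_assoc, ← mul_assoc, ← hc2]
        simp only [mul_assoc]

/-- Sublemma 9.3: if the `s_a` satisfy the commutation relations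
`s_a s_b = s_b s_a` for `|a - b| ≥ 2` and the braid relations, then for
`i ≤ k ≤ ℓ ≤ j`: `s_{i…j} · s_{k…(ℓ-1)} = s_{(k+1)…ℓ} · s_{i…j}`. -/
theorem statement16 {M : Type*} [Monoid M] (s : ℤ → M)
    (hcomm : ∀ a b : ℤ, 2 ≤ |a - b| → s a * s b = s b * s a)
    (hbraid : ∀ a : ℤ, s a * s (a + 1) * s a = s (a + 1) * s a * s (a + 1))
    (i k l j : ℤ) (h1 : i ≤ k) (h2 : k ≤ l) (h3 : l ≤ j) :
    sProd s i j * sProd s k (l - 1) = sProd s (k + 1) l * sProd s i j := by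
  have H : ∀ l : ℤ, k ≤ l → l ≤ j →
      sProd s i j * sProd s k (l - 1) = sProd s (k + 1) l * sProd s i j := by
    refine Int.le_induction ?_ ?_
    · intro _
      rw [sProd_of_lt s (show k - 1 < k by omega),
        sProd_of_lt s (show k < k + 1 by omega), mul_one, one_mul]
    · intro l hl ih h3''
      have h3' : l ≤ j := by omega
      rw [show l + 1 - 1 = l from by omega, sProd_succ_right s hl, ← mul_assoc,
        ih h3', mul_assoc,
        sProd_key s hcomm hbraid (by omega : i ≤ l) (by omega : l + 1 ≤ j), ← mul_assoc,
        sProd_succ_right s (by omega : k + 1 ≤ l + 1)]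
      simp only [add_sub_cancel_right]
  exact H l h2 h3
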